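/- arXiv:2411.02008 — 2 statements merged into one kernel-verified Lean document; each statement's English description precedes it below -/
import Mathlib

section
/- Sign transfer from the smoothed function to the exact function: for every λ > 0 and t ∈ ℝ, if F_λ(t) < 0 then F(t) < 0, and if F_λ(t) > 1/(4λ) then F(t) > 0. -/
open scoped BigOperators

/-- `f_k(Ω) = −(1/α)·|∑_n h_n e^{iΩ_n}|²`. -/
noncomputable def fObj {N : ℕ} (α : ℝ) (h : Fin N → ℂ) (Ω : Fin N → ℝ) : ℝ :=
  -(1 / α) * ‖∑ n, h n * Complex.exp (Complex.I * (Ω n : ℂ))‖ ^ 2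

/-- `g_q(Ω) = |∑_n c_n e^{iΩ_n}|²`. -/
noncomputable def gObj {N : ℕ} (c : Fin N → ℂ) (Ω : Fin N → ℝ) : ℝ :=
  ‖∑ n, c n * Complex.exp (Complex.I * (Ω n : ℂ))‖ ^ 2

/-- The unit simplex in Euclidean space `ℝ^m`. -/
def unitSimplex (m : ℕ) : Set (EuclideanSpace ℝ (Fin m)) :=
  {x | (∀ i, 0 ≤ x i) ∧ ∑ i, x i = 1}

/-- The compensated-convexity upper transform of the maximum function:
`C_λ(y) = λ‖y‖² − dist(2λy, Δ)²/(4λ) + 1/(4λ)`. -/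
noncomputable def Cupper {m : ℕ} (lam : ℝ) (y : EuclideanSpace ℝ (Fin m)) : ℝ :=
  lam * ‖y‖ ^ 2 - (Metric.infDist ((2 * lam) • y) (unitSimplex m)) ^ 2 / (4 * lam) + 1 / (4 * lam)

/-- `h(Ω,t) = (f_1(Ω)−t,…,f_K(Ω)−t, g_1(Ω)−σ_1,…,g_Q(Ω)−σ_Q) ∈ ℝ^{K+Q}`. -/
noncomputable def hVec {N K Q : ℕ} (h : Fin K → Fin N → ℂ) (α : Fin K → ℝ)
    (c : Fin Q → Fin N → ℂ) (σ : Fin Q → ℝ) (Ω : Fin N → ℝ) (t : ℝ) :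
    EuclideanSpace ℝ (Fin (K + Q)) :=
  WithLp.toLp 2 (fun i => Fin.addCases (fun k => fObj (α k) (h k) Ω - t) (fun q => gObj (c q) Ω - σ q) i)

/-- `F(t) = inf_Ω max( max_k (f_k(Ω) − t), max_q (g_q(Ω) − σ_q) )`. -/
noncomputable def Ffun {N K Q : ℕ} (h : Fin K → Fin N → ℂ) (α : Fin K → ℝ)
    (c : Fin Q → Fin N → ℂ) (σ : Fin Q → ℝ) (t : ℝ) : ℝ :=
  ⨅ Ω : Fin N → ℝ, max (⨆ k, (fObj (α k) (h k) Ω - t)) (⨆ q, (gObj (c q) Ω - σ q))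

/-- `F_λ(t) = inf_Ω C_λ(h(Ω,t))`. -/
noncomputable def Flam {N K Q : ℕ} (h : Fin K → Fin N → ℂ) (α : Fin K → ℝ)
    (c : Fin Q → Fin N → ℂ) (σ : Fin Q → ℝ) (lam t : ℝ) : ℝ :=
  ⨅ Ω : Fin N → ℝ, Cupper lam (hVec h α c σ Ω t)

/-! ### Auxiliary lemmas -/

lemma simplex_single_mem {m : ℕ} (j : Fin m) :
    EuclideanSpace.single j (1 : ℝ) ∈ unitSimplex m := by
  constructor
  · intro i
    simp only [EuclideanSpace.single_apply]
    split <;> norm_num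
  · simp [EuclideanSpace.single_apply]

lemma simplex_nonempty {m : ℕ} (hm : 0 < m) : (unitSimplex m).Nonempty :=
  ⟨EuclideanSpace.single ⟨0, hm⟩ (1 : ℝ), simplex_single_mem _⟩

/-- Lower bound: each coordinate is at most `C_λ(y)`. -/
lemma le_Cupper {m : ℕ} {lam : ℝ} (hlam : 0 < lam) (y : EuclideanSpace ℝ (Fin m))
    (j : Fin m) : y j ≤ Cupper lam y := by
  set e : EuclideanSpace ℝ (Fin m) := EuclideanSpace.single j (1 : ℝ) with he
  set d : ℝ := Metric.infDist ((2 * lam) • y) (unitSimplex m) with hd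
  have hd0 : 0 ≤ d := Metric.infDist_nonneg
  have hdle : d ≤ ‖(2 * lam) • y - e‖ := by
    rw [← dist_eq_norm]
    exact Metric.infDist_le_dist_of_mem (simplex_single_mem j)
  have hinner : (inner ℝ ((2 * lam) • y) e : ℝ) = 2 * lam * y j := by
    rw [he, EuclideanSpace.inner_single_right]
    simp [PiLp.smul_apply, smul_eq_mul]
  have hne : ‖e‖ = 1 := by rw [he, EuclideanSpace.norm_single]; norm_num
  have hns : ‖(2 * lam) • y‖ ^ 2 = (2 * lam) ^ 2 * ‖y‖ ^ 2 := by
    rw [norm_smul, mul_pow, Real.norm_eq_abs, sq_abs]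
  have hexp : ‖(2 * lam) • y - e‖ ^ 2 = (2 * lam) ^ 2 * ‖y‖ ^ 2 - 4 * lam * y j + 1 := by
    rw [norm_sub_sq_real, hinner, hne, hns]; ring
  have hd2 : d ^ 2 ≤ (2 * lam) ^ 2 * ‖y‖ ^ 2 - 4 * lam * y j + 1 := by
    rw [← hexp]
    exact pow_le_pow_left₀ hd0 hdle 2
  have h4 : (0:ℝ) < 4 * lam := by positivity
  rw [Cupper, ← hd]
  have hdiv : d ^ 2 / (4 * lam) ≤ ((2 * lam) ^ 2 * ‖y‖ ^ 2 - 4 * lam * y j + 1) / (4 * lam) :=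
    (div_le_div_iff_of_pos_right h4).mpr hd2
  have heq : ((2 * lam) ^ 2 * ‖y‖ ^ 2 - 4 * lam * y j + 1) / (4 * lam)
      = lam * ‖y‖ ^ 2 - y j + 1 / (4 * lam) := by
    field_simp; ring
  rw [heq] at hdiv
  linarith

/-- Upper bound: `C_λ(y) ≤ M + 1/(4λ)` whenever `M` bounds all coordinates. -/
lemma Cupper_le {m : ℕ} (hm : 0 < m) {lam : ℝ} (hlam : 0 < lam)
    (y : EuclideanSpace ℝ (Fin m)) (M : ℝ) (hM : ∀ i, y i ≤ M) :
    Cupper lam y ≤ M + 1 / (4 * lam) := by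
  set d : ℝ := Metric.infDist ((2 * lam) • y) (unitSimplex m) with hd
  have hd0 : 0 ≤ d := Metric.infDist_nonneg
  set b : ℝ := (2 * lam) ^ 2 * ‖y‖ ^ 2 - 4 * lam * M with hb
  have hkey : ∀ x ∈ unitSimplex m, b ≤ ‖(2 * lam) • y - x‖ ^ 2 := by
    intro x hx
    have hinner : (inner ℝ ((2 * lam) • y) x : ℝ) = 2 * lam * ∑ i, y i * x i := by
      rw [real_inner_smul_left, PiLp.inner_apply]
      simp [RCLike.inner_apply, mul_comm]
    have hsum : ∑ i, y i * x i ≤ M := by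
      calc ∑ i, y i * x i ≤ ∑ i, M * x i := by
            apply Finset.sum_le_sum
            intro i _
            exact mul_le_mul_of_nonneg_right (hM i) (hx.1 i)
        _ = M := by rw [← Finset.mul_sum, hx.2, mul_one]
    have hns : ‖(2 * lam) • y‖ ^ 2 = (2 * lam) ^ 2 * ‖y‖ ^ 2 := by
      rw [norm_smul, mul_pow, Real.norm_eq_abs, sq_abs]
    rw [norm_sub_sq_real, hinner, hns, hb]
    nlinarith [sq_nonneg ‖x‖, hlam]
  have hbd : b ≤ d ^ 2 := by
    rcases le_or_gt b 0 with hb0 | hb0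
    · exact hb0.trans (sq_nonneg d)
    · have hsq : Real.sqrt b ≤ d := by
        by_contra hc
        push_neg at hc
        rw [hd] at hc
        obtain ⟨x, hx, hdx⟩ := (Metric.infDist_lt_iff (simplex_nonempty hm)).1 hc
        have h1 : ‖(2 * lam) • y - x‖ < Real.sqrt b := by rwa [← dist_eq_norm]
        have h2 : b ≤ ‖(2 * lam) • y - x‖ ^ 2 := hkey x hx
        have h3 : ‖(2 * lam) • y - x‖ ^ 2 < Real.sqrt b ^ 2 :=
          pow_lt_pow_left₀ h1 (norm_nonneg _) (by norm_num)
        rw [Real.sq_sqrt hb0.le] at h3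
        linarith
      calc b = Real.sqrt b ^ 2 := (Real.sq_sqrt hb0.le).symm
        _ ≤ d ^ 2 := pow_le_pow_left₀ (Real.sqrt_nonneg b) hsq 2
  have h4 : (0:ℝ) < 4 * lam := by positivity
  rw [Cupper, ← hd]
  have : b / (4 * lam) ≤ d ^ 2 / (4 * lam) := by
    rw [div_le_div_iff_of_pos_right h4]; exact hbd
  have heq : b / (4 * lam) = lam * ‖y‖ ^ 2 - M := by
    rw [hb]; field_simp; ring
  linarith [this, heq ▸ this]

lemma hVec_left {N K Q : ℕ} (h : Fin K → Fin N → ℂ) (α : Fin K → ℝ)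
    (c : Fin Q → Fin N → ℂ) (σ : Fin Q → ℝ) (Ω : Fin N → ℝ) (t : ℝ) (k : Fin K) :
    hVec h α c σ Ω t (Fin.castAdd Q k) = fObj (α k) (h k) Ω - t := by
  have : hVec h α c σ Ω t (Fin.castAdd Q k) = Fin.addCases (motive := fun _ => ℝ)
      (fun k => fObj (α k) (h k) Ω - t) (fun q => gObj (c q) Ω - σ q) (Fin.castAdd Q k) := rfl
  rw [this, Fin.addCases_left]

lemma hVec_right {N K Q : ℕ} (h : Fin K → Fin N → ℂ) (α : Fin K → ℝ)
    (c : Fin Q → Fin N → ℂ) (σ : Fin Q → ℝ) (Ω : Fin N → ℝ) (t : ℝ) (q : Fin Q) :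
    hVec h α c σ Ω t (Fin.natAdd K q) = gObj (c q) Ω - σ q := by
  have : hVec h α c σ Ω t (Fin.natAdd K q) = Fin.addCases (motive := fun _ => ℝ)
      (fun k => fObj (α k) (h k) Ω - t) (fun q => gObj (c q) Ω - σ q) (Fin.natAdd K q) := rfl
  rw [this, Fin.addCases_right]

/-- Sign transfer: if `F_λ(t) < 0` then `F(t) < 0`, and if `F_λ(t) > 1/(4λ)` then `F(t) > 0`. -/
theorem stmt10 {N K Q : ℕ} (hN : 0 < N) (hK : 0 < K) (hQ : 0 < Q)
    (h : Fin K → Fin N → ℂ) (α : Fin K → ℝ) (hα : ∀ k, 0 < α k)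
    (c : Fin Q → Fin N → ℂ) (σ : Fin Q → ℝ) (lam : ℝ) (hlam : 0 < lam) (t : ℝ) :
    (Flam h α c σ lam t < 0 → Ffun h α c σ t < 0) ∧
    (Flam h α c σ lam t > 1 / (4 * lam) → Ffun h α c σ t > 0) := by
  have hKQ : 0 < K + Q := Nat.add_pos_left hK Q
  haveI : Nonempty (Fin K) := ⟨⟨0, hK⟩⟩
  haveI : Nonempty (Fin Q) := ⟨⟨0, hQ⟩⟩
  set M : (Fin N → ℝ) → ℝ := fun Ω =>
    max (⨆ k, (fObj (α k) (h k) Ω - t)) (⨆ q, (gObj (c q) Ω - σ q)) with hM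
  set C : (Fin N → ℝ) → ℝ := fun Ω => Cupper lam (hVec h α c σ Ω t) with hC
  -- coordinates of hVec are bounded by M Ω
  have hcoord : ∀ Ω (i : Fin (K + Q)), hVec h α c σ Ω t i ≤ M Ω := by
    intro Ω i
    refine Fin.addCases (motive := fun i => hVec h α c σ Ω t i ≤ M Ω) ?_ ?_ i
    · intro k
      rw [hVec_left]
      exact le_trans
        (le_ciSup (f := fun k => fObj (α k) (h k) Ω - t)
          (Set.Finite.bddAbove (Set.finite_range _)) k) (le_max_left _ _)
    · intro q
      rw [hVec_right]
      exact le_trans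
        (le_ciSup (f := fun q => gObj (c q) Ω - σ q)
          (Set.Finite.bddAbove (Set.finite_range _)) q) (le_max_right _ _)
  -- M Ω ≤ C Ω
  have hMC : ∀ Ω, M Ω ≤ C Ω := by
    intro Ω
    apply max_le
    · apply ciSup_le
      intro k
      have := le_Cupper hlam (hVec h α c σ Ω t) (Fin.castAdd Q k)
      rwa [hVec_left] at this
    · apply ciSup_le
      intro q
      have := le_Cupper hlam (hVec h α c σ Ω t) (Fin.natAdd K q)
      rwa [hVec_right] at this
  -- C Ω ≤ M Ω + 1/(4λ)
  have hCM : ∀ Ω, C Ω ≤ M Ω + 1 / (4 * lam) :=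
    fun Ω => Cupper_le hKQ hlam _ _ (hcoord Ω)
  -- lower bound for M
  have hMlb : ∀ Ω, -σ ⟨0, hQ⟩ ≤ M Ω := by
    intro Ω
    have h1 : gObj (c ⟨0, hQ⟩) Ω - σ ⟨0, hQ⟩ ≤ ⨆ q, (gObj (c q) Ω - σ q) :=
      le_ciSup (f := fun q => gObj (c q) Ω - σ q)
        (Set.Finite.bddAbove (Set.finite_range _)) ⟨0, hQ⟩
    have h2 : 0 ≤ gObj (c ⟨0, hQ⟩) Ω := by unfold gObj; positivity
    exact le_trans (by linarith) (le_trans h1 (le_max_right _ _))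
  have hMbdd : BddBelow (Set.range M) := ⟨-σ ⟨0, hQ⟩, by rintro x ⟨Ω, rfl⟩; exact hMlb Ω⟩
  have hCbdd : BddBelow (Set.range C) :=
    ⟨-σ ⟨0, hQ⟩, by rintro x ⟨Ω, rfl⟩; exact le_trans (hMlb Ω) (hMC Ω)⟩
  have hFdef : Ffun h α c σ t = ⨅ Ω, M Ω := rfl
  have hFldef : Flam h α c σ lam t = ⨅ Ω, C Ω := rfl
  constructor
  · intro hneg
    have hle : Ffun h α c σ t ≤ Flam h α c σ lam t := by
      rw [hFdef, hFldef]
      apply le_ciInf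
      intro Ω
      exact le_trans (ciInf_le hMbdd Ω) (hMC Ω)
    linarith
  · intro hpos
    have hge : Flam h α c σ lam t - 1 / (4 * lam) ≤ Ffun h α c σ t := by
      rw [hFdef, hFldef]
      apply le_ciInf
      intro Ω
      have h1 : (⨅ Ω, C Ω) ≤ C Ω := ciInf_le hCbdd Ω
      have h2 := hCM Ω
      linarith
    linarith
end

section
/- The smoothed value function F_λ is monotonically decreasing: for every λ > 0 and all real numbers t₁ ≤ t₂ one has F_λ(t₂) ≤ F_λ(t₁). -/
open scoped BigOperators

lemma unitSimplex_single_mem {m : ℕ} (i : Fin m) :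
    EuclideanSpace.single i (1:ℝ) ∈ unitSimplex m := by
  constructor
  · intro j; rw [EuclideanSpace.single_apply]; split <;> norm_num
  · simp [EuclideanSpace.single_apply]

lemma isClosed_unitSimplex (m : ℕ) : IsClosed (unitSimplex m) := by
  have h1 : IsClosed {x : EuclideanSpace ℝ (Fin m) | ∀ i, 0 ≤ x i} := by
    have he : {x : EuclideanSpace ℝ (Fin m) | ∀ i, 0 ≤ x i} = ⋂ i, {x | 0 ≤ x i} := by
      ext x; simp
    rw [he]
    exact isClosed_iInter fun i =>
      isClosed_le continuous_const (EuclideanSpace.proj (𝕜 := ℝ) i).continuous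
  have h2 : IsClosed {x : EuclideanSpace ℝ (Fin m) | ∑ i, x i = 1} :=
    isClosed_eq (continuous_finset_sum _ fun i _ =>
      (EuclideanSpace.proj (𝕜 := ℝ) i).continuous) continuous_const
  exact h1.inter h2

lemma key_mono {m : ℕ} (hm : 0 < m) (z z' : EuclideanSpace ℝ (Fin m))
    (hzz : ∀ i, z i ≤ z' i) :
    ‖z‖^2 - (Metric.infDist z (unitSimplex m))^2 ≤
      ‖z'‖^2 - (Metric.infDist z' (unitSimplex m))^2 := by
  have hne : (unitSimplex m).Nonempty := ⟨_, unitSimplex_single_mem ⟨0, hm⟩⟩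
  obtain ⟨x, hx, hdx⟩ := (isClosed_unitSimplex m).exists_infDist_eq_dist hne z
  have h1 : ‖z‖^2 - (Metric.infDist z (unitSimplex m))^2
      = 2 * (inner ℝ z x : ℝ) - ‖x‖^2 := by
    rw [hdx, dist_eq_norm, norm_sub_sq_real]; ring
  have hinner : (inner ℝ z x : ℝ) ≤ (inner ℝ z' x : ℝ) := by
    rw [PiLp.inner_apply, PiLp.inner_apply]
    refine Finset.sum_le_sum fun i _ => ?_
    simpa [RCLike.inner_apply] using mul_le_mul_of_nonneg_left (hzz i) (hx.1 i)
  have hd : Metric.infDist z' (unitSimplex m) ≤ ‖z' - x‖ := by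
    simpa [dist_eq_norm] using Metric.infDist_le_dist_of_mem (x := z') hx
  have hd2 : (Metric.infDist z' (unitSimplex m))^2 ≤ ‖z' - x‖^2 :=
    pow_le_pow_left₀ Metric.infDist_nonneg hd 2
  have hns := norm_sub_sq_real z' x
  linarith

lemma cupper_eq {m : ℕ} (lam : ℝ) (hlam : 0 < lam) (y : EuclideanSpace ℝ (Fin m)) :
    Cupper lam y = (‖(2*lam) • y‖^2 - (Metric.infDist ((2*lam) • y) (unitSimplex m))^2) / (4*lam)
      + 1/(4*lam) := by
  unfold Cupper
  have hn : ‖(2*lam) • y‖ = (2*lam) * ‖y‖ := by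
    rw [norm_smul]; simp [abs_of_pos, hlam, Real.norm_eq_abs]
  rw [hn]
  have h4 : (4*lam) ≠ 0 := by positivity
  field_simp
  ring

lemma cupper_mono {m : ℕ} (hm : 0 < m) {lam : ℝ} (hlam : 0 < lam)
    {y y' : EuclideanSpace ℝ (Fin m)} (hyy : ∀ i, y i ≤ y' i) :
    Cupper lam y ≤ Cupper lam y' := by
  rw [cupper_eq lam hlam, cupper_eq lam hlam]
  have hz : ∀ i, ((2*lam) • y) i ≤ ((2*lam) • y') i := by
    intro i
    rw [PiLp.smul_apply, PiLp.smul_apply, smul_eq_mul, smul_eq_mul]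
    exact mul_le_mul_of_nonneg_left (hyy i) (by positivity)
  have hkey := key_mono hm _ _ hz
  have h4 : (0:ℝ) < 4*lam := by positivity
  gcongr

lemma cupper_ge {m : ℕ} {lam : ℝ} (hlam : 0 < lam) (y : EuclideanSpace ℝ (Fin m)) (i : Fin m) :
    y i ≤ Cupper lam y := by
  rw [cupper_eq lam hlam]
  set z := (2*lam) • y with hzdef
  have hd : Metric.infDist z (unitSimplex m) ≤ ‖z - EuclideanSpace.single i 1‖ := by
    simpa [dist_eq_norm] using Metric.infDist_le_dist_of_mem (x := z) (unitSimplex_single_mem i)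
  have hd2 : (Metric.infDist z (unitSimplex m))^2 ≤ ‖z - EuclideanSpace.single i 1‖^2 :=
    pow_le_pow_left₀ Metric.infDist_nonneg hd 2
  have hns : ‖z - EuclideanSpace.single i (1:ℝ)‖^2 = ‖z‖^2 - 2*(z i) + 1 := by
    rw [norm_sub_sq_real, EuclideanSpace.inner_single_right, EuclideanSpace.norm_single]
    simp
  have hz : z i = 2*lam*(y i) := by rw [hzdef, PiLp.smul_apply, smul_eq_mul]
  have h4 : (0:ℝ) < 4*lam := by positivity
  have hlow : 2*(z i) - 1 ≤ ‖z‖^2 - (Metric.infDist z (unitSimplex m))^2 := by linarith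
  calc y i = (2*(z i) - 1)/(4*lam) + 1/(4*lam) := by
        rw [hz]; field_simp; ring
    _ ≤ _ := by gcongr

/-- The smoothed value function `F_λ` is monotonically decreasing in `t`. -/
theorem stmt11 {N K Q : ℕ} (hN : 0 < N) (hK : 0 < K) (hQ : 0 < Q)
    (h : Fin K → Fin N → ℂ) (α : Fin K → ℝ) (hα : ∀ k, 0 < α k)
    (c : Fin Q → Fin N → ℂ) (σ : Fin Q → ℝ) (lam : ℝ) (hlam : 0 < lam) :
    ∀ t₁ t₂ : ℝ, t₁ ≤ t₂ → Flam h α c σ lam t₂ ≤ Flam h α c σ lam t₁ := by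
  intro t₁ t₂ ht
  have hm : 0 < K + Q := by omega
  set q0 : Fin Q := ⟨0, hQ⟩
  apply ciInf_mono
  · refine ⟨-σ q0, ?_⟩
    rintro x ⟨Ω, rfl⟩
    have h1 := cupper_ge hlam (hVec h α c σ Ω t₂) (Fin.natAdd K q0)
    have h2 : hVec h α c σ Ω t₂ (Fin.natAdd K q0) = gObj (c q0) Ω - σ q0 := by
      simp [hVec]
    have h3 : 0 ≤ gObj (c q0) Ω := by unfold gObj; positivity
    rw [h2] at h1
    linarith
  · intro Ω
    apply cupper_mono hm hlam
    intro i
    refine Fin.addCases (fun k => ?_) (fun q => ?_) i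
    · simp only [hVec, WithLp.ofLp_toLp, Fin.addCases_left]
      linarith
    · simp only [hVec, WithLp.ofLp_toLp, Fin.addCases_right]
      exact le_refl _
end
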